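/- Define Q = φ₂/(φ−sφ₂), R = φ₁/(φ−sφ₂), Θ = ((φ−sφ₂)φ₂ − sφφ₂₂)/(2φΔ), Ψ = φ₂₂/(2Δ), Π = ((φ−sφ₂)φ₁₂ − sφ₁φ₂₂)/((φ−sφ₂)Δ), Ω = 2φ₁/φ − (sφ+(b²−s²)φ₂)/φ·Π, with Δ = φ−sφ₂+(b²−s²)φ₂₂. Then the combination E := Θ(1+2Rb²) + sΩ equals (φ₂+2sφ₁)/(2φ) − H·(sφ+(b²−s²)φ₂)/φ, where H := Ψ(1+2Rb²) + sΠ − R = (φ₂₂ − 2(φ₁ − sφ₁₂))/(2Δ). -/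

import Mathlib

/-- the spray-coefficient combination Θ(1+2Rb²) + sΩ equals
    (φ₂+2sφ₁)/(2φ) − H·(sφ+(b²−s²)φ₂)/φ with
    H = Ψ(1+2Rb²)+sΠ−R = (φ₂₂−2(φ₁−sφ₁₂))/(2Δ). -/
theorem stmt_11 (φ φ1 φ2 φ12 φ22 s b2 : ℝ)
    (hφ : φ ≠ 0) (hreg : φ - s * φ2 ≠ 0)
    (hΔ : φ - s * φ2 + (b2 - s ^ 2) * φ22 ≠ 0) :
    let Δ : ℝ := φ - s * φ2 + (b2 - s ^ 2) * φ22
    let Q : ℝ := φ2 / (φ - s * φ2)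
    let R : ℝ := φ1 / (φ - s * φ2)
    let Θ : ℝ := ((φ - s * φ2) * φ2 - s * φ * φ22) / (2 * φ * Δ)
    let Ψ : ℝ := φ22 / (2 * Δ)
    let Pi : ℝ := ((φ - s * φ2) * φ12 - s * φ1 * φ22) / ((φ - s * φ2) * Δ)
    let Ω : ℝ := 2 * φ1 / φ - (s * φ + (b2 - s ^ 2) * φ2) / φ * Pi
    let H : ℝ := Ψ * (1 + 2 * R * b2) + s * Pi - R
    let E : ℝ := Θ * (1 + 2 * R * b2) + s * Ω
    E = (φ2 + 2 * s * φ1) / (2 * φ) - H * (s * φ + (b2 - s ^ 2) * φ2) / φ ∧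
      H = (φ22 - 2 * (φ1 - s * φ12)) / (2 * Δ) := by
  intro Δ Q R Θ Ψ Pi Ω H E
  constructor
  · show Θ * (1 + 2 * R * b2) + s * Ω = _
    simp only [Θ, R, Ω, Pi, H, Ψ, Δ]
    have hΔ' : φ - s * φ2 + φ22 * (b2 - s ^ 2) ≠ 0 := by rw [mul_comm φ22]; exact hΔ
    field_simp
    ring
  · show Ψ * (1 + 2 * R * b2) + s * Pi - R = _
    simp only [Ψ, R, Pi, Δ]
    have hΔ' : φ - s * φ2 + φ22 * (b2 - s ^ 2) ≠ 0 := by rw [mul_comm φ22]; exact hΔ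
    field_simp
    ring
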